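/- (Theorem 8) Let K ∈ M₊(ℝ₊²) with iterated rearrangement L = (K^{*₂})^{*₁}. Let Φ₁, Φ₂ be N-functions with Φ₁(2t) ≈ Φ₁(t) for t ≫ 1, and let u₁, u₂ be weights with ∫₀^∞ u₁ = ∞. Assume there exists C₀ > 0 with ρ_{Φ₁,u₁}( t ↦ t⁻¹∫₀ᵗ g ) ≤ C₀ ρ_{Φ₁,u₁}( g ) for every nonincreasing g ∈ M₊(ℝ₊). If there exists C > 0 with ρ_{Φ₁,u₁}( T_L f* ) ≤ C ρ_{Φ₂,u₂}( f* ) for all f ∈ M₊(ℝ₊), then there exists C′ > 0 with ρ_{Φ₁,u₁}( (T_K f)* ) ≤ C′ ρ_{Φ₂,u₂}( f* ) for all f ∈ M₊(ℝ₊). -/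

import Mathlib

open MeasureTheory Set Function
open scoped ENNReal

noncomputable section

/-- The nonincreasing rearrangement of `f` with respect to the measure `μ`:
`f*(t) = inf {λ > 0 : μ{x : f x > λ} ≤ t}`. -/
def rearr {α : Type*} [MeasurableSpace α] (μ : Measure α) (f : α → ℝ≥0∞) (t : ℝ) : ℝ≥0∞ :=
  sInf {l : ℝ≥0∞ | 0 < l ∧ μ {x | l < f x} ≤ ENNReal.ofReal t}

/-- Lebesgue measure restricted to `(0,∞)`. -/
def mP : Measure ℝ := volume.restrict (Ioi 0)

/-- The nonincreasing rearrangement of a function on `(0,∞)`. -/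
def rearrP (f : ℝ → ℝ≥0∞) : ℝ → ℝ≥0∞ := rearr mP f

/-- Application of a real function (e.g. an N-function) to an extended nonnegative
real number, sending `∞` to `∞`. -/
def appE (Φ : ℝ → ℝ) (x : ℝ≥0∞) : ℝ≥0∞ :=
  if x = ∞ then ∞ else ENNReal.ofReal (Φ x.toReal)

/-- Generalized inverse of an increasing function on `[0,∞)`. -/
def nInv (Φ : ℝ → ℝ) (v : ℝ) : ℝ :=
  sInf {x : ℝ | 0 ≤ x ∧ v ≤ Φ x}

/-- The generalized inverse, extended to `ℝ≥0∞`. -/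
def nInvE (Φ : ℝ → ℝ) (v : ℝ≥0∞) : ℝ≥0∞ :=
  if v = ∞ then ∞ else ENNReal.ofReal (nInv Φ v.toReal)

/-- `Φ` is the N-function `Φ(x) = ∫₀ˣ φ`, where `φ : (0,∞) → (0,∞)` is
nondecreasing and onto `(0,∞)`. -/
def IsNFunctionWith (φ Φ : ℝ → ℝ) : Prop :=
  MonotoneOn φ (Ioi 0) ∧ (∀ y > 0, 0 < φ y) ∧ (∀ s > 0, ∃ y > 0, φ y = s) ∧
    ∀ x : ℝ, Φ x = ∫ y in Ioc 0 x, φ y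

/-- `Φ` is an N-function. -/
def IsNFunction (Φ : ℝ → ℝ) : Prop := ∃ φ, IsNFunctionWith φ Φ

/-- `Φ` and `Ψ` are complementary N-functions: `Φ(x) = ∫₀ˣ φ` and `Ψ(t) = ∫₀ᵗ φ⁻¹`,
where `φ⁻¹(s) = inf {y > 0 : φ y ≥ s}`. -/
def IsNPair (Φ Ψ : ℝ → ℝ) : Prop :=
  ∃ φ, IsNFunctionWith φ Φ ∧
    ∀ t : ℝ, Ψ t = ∫ s in Ioc 0 t, sInf {y : ℝ | 0 < y ∧ s ≤ φ y}

/-- `Φ(2t) ≈ Φ(t)` for `t ≫ 1`. -/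
def Delta2AtInfty (Φ : ℝ → ℝ) : Prop :=
  ∃ c > (0:ℝ), ∃ T > (0:ℝ), ∀ t ≥ T, Φ (2 * t) ≤ c * Φ t

/-- A weight: a nonnegative locally integrable function on `(0,∞)`. -/
def IsWeight (u : ℝ → ℝ) : Prop :=
  (∀ x ∈ Ioi (0:ℝ), 0 ≤ u x) ∧ LocallyIntegrableOn u (Ioi 0)

/-- The weighted Orlicz gauge norm `ρ_{Φ,u}` on `(0,∞)`. -/
def gaugeW (Φ : ℝ → ℝ) (u : ℝ → ℝ) (f : ℝ → ℝ≥0∞) : ℝ≥0∞ :=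
  sInf {l : ℝ≥0∞ | 0 < l ∧
    ∫⁻ x in Ioi (0:ℝ), appE Φ (f x / l) * ENNReal.ofReal (u x) ≤ 1}

/-- The unweighted Orlicz gauge norm `ρ_Φ` on `(0,∞)`. -/
def gaugeP (Φ : ℝ → ℝ) (f : ℝ → ℝ≥0∞) : ℝ≥0∞ :=
  sInf {l : ℝ≥0∞ | 0 < l ∧ ∫⁻ x in Ioi (0:ℝ), appE Φ (f x / l) ≤ 1}

/-- The unweighted Orlicz gauge norm `ρ_Φ` on `ℝⁿ`. -/
def gaugeE {n : ℕ} (Φ : ℝ → ℝ) (f : EuclideanSpace ℝ (Fin n) → ℝ≥0∞) : ℝ≥0∞ :=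
  sInf {l : ℝ≥0∞ | 0 < l ∧ ∫⁻ x, appE Φ (f x / l) ≤ 1}

/-- Convolution of nonnegative functions on `ℝⁿ`. -/
def conv {n : ℕ} (f g : EuclideanSpace ℝ (Fin n) → ℝ≥0∞)
    (x : EuclideanSpace ℝ (Fin n)) : ℝ≥0∞ :=
  ∫⁻ y, f (x - y) * g y

/-- The integral operator with kernel `K` on `(0,∞)`. -/
def TK (K : ℝ → ℝ → ℝ≥0∞) (f : ℝ → ℝ≥0∞) (x : ℝ) : ℝ≥0∞ :=
  ∫⁻ y in Ioi (0:ℝ), K x y * f y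

/-- The iterated rearrangement `L = (K^{*₂})^{*₁}` of a kernel on `(0,∞)²`:
first rearrange `y ↦ K x y` for fixed `x`, then rearrange the result in `x`. -/
def iterRearr (K : ℝ → ℝ → ℝ≥0∞) (t s : ℝ) : ℝ≥0∞ :=
  rearrP (fun x => rearrP (K x) s) t


instance : SFinite mP := by unfold mP; infer_instance
instance : SigmaFinite mP := by unfold mP; infer_instance

lemma mP_apply (A : Set ℝ) : mP A = volume (A ∩ Ioi 0) :=
  Measure.restrict_apply' measurableSet_Ioi

lemma rearr_anti {α : Type*} [MeasurableSpace α] (μ : Measure α) (f : α → ℝ≥0∞) :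
    Antitone (rearr μ f) := by
  intro t₁ t₂ h
  exact sInf_le_sInf fun l hl => ⟨hl.1, hl.2.trans (ENNReal.ofReal_le_ofReal h)⟩

lemma le_rearr_of_lt_dist {α : Type*} [MeasurableSpace α] {μ : Measure α} {f : α → ℝ≥0∞}
    {t : ℝ} {m : ℝ≥0∞} (h : ENNReal.ofReal t < μ {x | m < f x}) : m ≤ rearr μ f t := by
  refine le_sInf fun l hl => ?_
  by_contra hml
  push_neg at hml
  exact absurd (le_trans (measure_mono fun x hx => lt_trans hml hx) hl.2) (not_le.2 h)

/-- sublevel/lower sets in ℝ are measurable -/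
lemma lowerSet_measurable {S : Set ℝ} (h : ∀ ⦃y⦄, y ∈ S → ∀ ⦃z⦄, z ≤ y → z ∈ S) :
    MeasurableSet S := by
  rcases S.eq_empty_or_nonempty with rfl | hne
  · exact MeasurableSet.empty
  by_cases hbd : BddAbove S
  · by_cases hmem : sSup S ∈ S
    · have : S = Iic (sSup S) := by
        apply Subset.antisymm (fun y hy => le_csSup hbd hy)
        exact fun y hy => h hmem hy
      rw [this]; exact measurableSet_Iic
    · have : S = Iio (sSup S) := by
        apply Subset.antisymm
        · intro y hy
          exact lt_of_le_of_ne (le_csSup hbd hy) (by rintro rfl; exact hmem hy)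
        · intro y hy
          obtain ⟨s, hs, hys⟩ := exists_lt_of_lt_csSup hne hy
          exact h hs hys.le
      rw [this]; exact measurableSet_Iio
  · have : S = univ := by
      apply eq_univ_of_forall
      intro y
      obtain ⟨s, hs, hys⟩ := not_bddAbove_iff.1 hbd y
      exact h hs hys.le
    rw [this]; exact MeasurableSet.univ

lemma ofReal_lt_measurable (c : ℝ≥0∞) : MeasurableSet {τ : ℝ | ENNReal.ofReal τ < c} :=
  lowerSet_measurable fun y hy z hz =>
    lt_of_le_of_lt (ENNReal.ofReal_le_ofReal hz) hy

lemma vol_ofReal_lt (c : ℝ≥0∞) :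
    volume ({τ : ℝ | ENNReal.ofReal τ < c} ∩ Ioi 0) = c := by
  rcases eq_or_ne c ⊤ with rfl | hc
  · have : {τ : ℝ | ENNReal.ofReal τ < ⊤} ∩ Ioi 0 = Ioi 0 := by
      apply inter_eq_right.2
      intro x _; exact ENNReal.ofReal_lt_top
    rw [this, Real.volume_Ioi]
  · have : {τ : ℝ | ENNReal.ofReal τ < c} ∩ Ioi 0 = Ioo 0 c.toReal := by
      ext τ
      simp only [mem_inter_iff, mem_setOf_eq, mem_Ioi, mem_Ioo]
      constructor
      · rintro ⟨h1, h2⟩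
        exact ⟨h2, (ENNReal.ofReal_lt_iff_lt_toReal h2.le hc).1 h1⟩
      · rintro ⟨h1, h2⟩
        exact ⟨(ENNReal.ofReal_lt_iff_lt_toReal h1.le hc).2 h2, h1⟩
    rw [this, Real.volume_Ioo, sub_zero, ENNReal.ofReal_toReal hc]

/-- distribution of the rearrangement dominates the distribution -/
lemma dist_rearr_ge (f : ℝ → ℝ≥0∞) (l : ℝ) :
    mP {x | ENNReal.ofReal l < f x} ≤ mP {τ | ENNReal.ofReal l < rearrP f τ} := by
  -- reduce to l ≥ 0
  wlog hl : 0 ≤ l with H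
  · push_neg at hl
    have h0 : ENNReal.ofReal l = ENNReal.ofReal 0 := by
      rw [ENNReal.ofReal_zero, ENNReal.ofReal_eq_zero]; exact hl.le
    rw [h0]; exact H f 0 le_rfl
  set D := mP {x | ENNReal.ofReal l < f x} with hD
  have hsup : D = ⨆ n : ℕ, mP {x | ENNReal.ofReal (l + 1 / (n + 1)) < f x} := by
    have hmono : Monotone fun n : ℕ => {x | ENNReal.ofReal (l + 1 / (n + 1)) < f x} := by
      intro n m hnm x hx
      refine lt_of_le_of_lt (ENNReal.ofReal_le_ofReal ?_) hx
      have : (1 : ℝ) / (m + 1) ≤ 1 / (n + 1) := by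
        apply one_div_le_one_div_of_le
        · positivity
        · exact_mod_cast add_le_add_left (Nat.cast_le.2 hnm) 1
      linarith
    have hUnion : {x | ENNReal.ofReal l < f x}
        = ⋃ n : ℕ, {x | ENNReal.ofReal (l + 1 / (n + 1)) < f x} := by
      ext x
      simp only [mem_setOf_eq, mem_iUnion]
      constructor
      · intro hx
        rcases eq_or_ne (f x) ⊤ with hfx | hfx
        · exact ⟨0, by rw [hfx]; exact ENNReal.ofReal_lt_top⟩
        · have hlt : l < (f x).toReal := (ENNReal.ofReal_lt_iff_lt_toReal hl hfx).1 hx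
          obtain ⟨n, hn⟩ := exists_nat_one_div_lt (sub_pos.2 hlt)
          refine ⟨n, (ENNReal.ofReal_lt_iff_lt_toReal (by positivity) hfx).2 ?_⟩
          linarith
      · rintro ⟨n, hn⟩
        refine lt_of_le_of_lt (ENNReal.ofReal_le_ofReal ?_) hn
        have : (0:ℝ) < 1 / (n + 1) := by positivity
        linarith
    rw [hD, hUnion, Directed.measure_iUnion (hmono.directed_le)]
  have hsub : {τ : ℝ | ENNReal.ofReal τ < D} ∩ Ioi 0
      ⊆ {τ | ENNReal.ofReal l < rearrP f τ} ∩ Ioi 0 := by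
    rintro τ ⟨hτD, hτ0⟩
    rw [hsup] at hτD
    simp only [mem_setOf_eq] at hτD
    obtain ⟨n, hn⟩ := lt_iSup_iff.1 hτD
    have h1 : ENNReal.ofReal (l + 1 / (n + 1)) ≤ rearrP f τ := le_rearr_of_lt_dist hn
    have h2 : ENNReal.ofReal l < ENNReal.ofReal (l + 1 / (n + 1)) := by
      apply ENNReal.ofReal_lt_ofReal_iff_of_nonneg hl |>.2
      have : (0:ℝ) < 1 / (n + 1) := by positivity
      linarith
    exact ⟨lt_of_lt_of_le h2 h1, hτ0⟩
  calc D = volume ({τ : ℝ | ENNReal.ofReal τ < D} ∩ Ioi 0) := (vol_ofReal_lt D).symm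
    _ ≤ volume ({τ | ENNReal.ofReal l < rearrP f τ} ∩ Ioi 0) := measure_mono hsub
    _ = mP {τ | ENNReal.ofReal l < rearrP f τ} := (mP_apply _).symm

/-- superlevel sets of rearrangements are "lower" within (0,∞); two such sets nest -/
lemma nested_min {A B : Set ℝ}
    (hA : ∀ y ∈ A, ∀ z, 0 < z → z ≤ y → z ∈ A)
    (hB : ∀ y ∈ B, ∀ z, 0 < z → z ≤ y → z ∈ B)
    (hA0 : A ⊆ Ioi 0) (hB0 : B ⊆ Ioi 0) :
    volume (A ∩ B) = min (volume A) (volume B) := by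
  have : A ⊆ B ∨ B ⊆ A := by
    by_contra hc
    push_neg at hc
    obtain ⟨h1, h2⟩ := hc
    obtain ⟨a, ha, haB⟩ := not_subset.1 h1
    obtain ⟨b, hb, hbA⟩ := not_subset.1 h2
    rcases le_total a b with hab | hab
    · exact haB (hB b hb a (hA0 ha) hab)
    · exact hbA (hA a ha b (hB0 hb) hab)
  rcases this with h | h
  · rw [inter_eq_left.2 h]
    exact (min_eq_left (measure_mono h)).symm
  · rw [inter_eq_right.2 h]
    exact (min_eq_right (measure_mono h)).symm

open Classical in
lemma LC1 (c : ℝ≥0∞) :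
    ∫⁻ l in Ioi (0:ℝ), (if ENNReal.ofReal l < c then (1:ℝ≥0∞) else 0) = c := by
  have h1 : ∀ l : ℝ, (if ENNReal.ofReal l < c then (1:ℝ≥0∞) else 0)
      = {τ : ℝ | ENNReal.ofReal τ < c}.indicator 1 l := by
    intro l
    by_cases h : ENNReal.ofReal l < c <;> simp [h, indicator_apply, mem_setOf_eq]
  simp_rw [h1]
  rw [lintegral_indicator_one (ofReal_lt_measurable c)]
  rw [Measure.restrict_apply' measurableSet_Ioi]
  exact vol_ofReal_lt c

open Classical in
lemma LCP {u v : ℝ → ℝ≥0∞} (hu : Measurable u) (hv : Measurable v) :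
    ∫⁻ x, u x * v x ∂mP
      = ∫⁻ l in Ioi (0:ℝ), ∫⁻ x, (if ENNReal.ofReal l < u x then v x else 0) ∂mP := by
  have hpt : ∀ x, u x * v x
      = ∫⁻ l in Ioi (0:ℝ), (if ENNReal.ofReal l < u x then v x else 0) := by
    intro x
    have h1 : ∀ l : ℝ, (if ENNReal.ofReal l < u x then v x else 0)
        = (if ENNReal.ofReal l < u x then (1:ℝ≥0∞) else 0) * v x := by
      intro l; by_cases h : ENNReal.ofReal l < u x <;> simp [h]
    simp_rw [h1]
    rw [lintegral_mul_const]
    · rw [LC1]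
    · have : (fun l : ℝ => if ENNReal.ofReal l < u x then (1:ℝ≥0∞) else 0)
        = {τ : ℝ | ENNReal.ofReal τ < u x}.indicator 1 := by
        ext l; by_cases h : ENNReal.ofReal l < u x <;> simp [h, indicator_apply, mem_setOf_eq]
      rw [this]
      exact measurable_one.indicator (ofReal_lt_measurable _)
  simp_rw [hpt]
  apply lintegral_lintegral_swap
  apply Measurable.aemeasurable
  apply Measurable.ite _ (hv.comp measurable_fst) measurable_const
  exact measurableSet_lt (ENNReal.measurable_ofReal.comp measurable_snd)
    (hu.comp measurable_fst)

open Classical in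
lemma LC2 {u v : ℝ → ℝ≥0∞} (hu : Measurable u) (hv : Measurable v) :
    ∫⁻ x, u x * v x ∂mP
      = ∫⁻ l in Ioi (0:ℝ), ∫⁻ s in Ioi (0:ℝ),
          mP ({x | ENNReal.ofReal l < u x} ∩ {x | ENNReal.ofReal s < v x}) := by
  rw [LCP hu hv]
  apply lintegral_congr
  intro l
  have h1 : ∀ x, (if ENNReal.ofReal l < u x then v x else 0)
      = v x * (if ENNReal.ofReal l < u x then (1:ℝ≥0∞) else 0) := by
    intro x; by_cases h : ENNReal.ofReal l < u x <;> simp [h]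
  simp_rw [h1]
  have hw : Measurable fun x => (if ENNReal.ofReal l < u x then (1:ℝ≥0∞) else 0) :=
    Measurable.ite (measurableSet_lt measurable_const hu) measurable_const measurable_const
  rw [LCP hv hw]
  apply lintegral_congr
  intro s
  have h2 : ∀ x, (if ENNReal.ofReal s < v x then
        (if ENNReal.ofReal l < u x then (1:ℝ≥0∞) else 0) else 0)
      = ({x | ENNReal.ofReal l < u x} ∩ {x | ENNReal.ofReal s < v x}).indicator 1 x := by
    intro x
    by_cases h3 : ENNReal.ofReal l < u x <;> by_cases h4 : ENNReal.ofReal s < v x <;>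
      simp [h3, h4, indicator_apply, mem_inter_iff, mem_setOf_eq]
  simp_rw [h2]
  exact lintegral_indicator_one
    ((measurableSet_lt measurable_const hu).inter (measurableSet_lt measurable_const hv))

lemma rearrP_anti (f : ℝ → ℝ≥0∞) : Antitone (rearrP f) := rearr_anti mP f
lemma rearrP_meas (f : ℝ → ℝ≥0∞) : Measurable (rearrP f) := (rearrP_anti f).measurable

/-- Hardy–Littlewood rearrangement inequality on (0,∞) -/
lemma HL {u v : ℝ → ℝ≥0∞} (hu : Measurable u) (hv : Measurable v) :
    ∫⁻ x, u x * v x ∂mP ≤ ∫⁻ x, rearrP u x * rearrP v x ∂mP := by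
  rw [LC2 hu hv, LC2 (rearrP_meas u) (rearrP_meas v)]
  apply lintegral_mono
  intro l
  apply lintegral_mono
  intro s
  calc mP ({x | ENNReal.ofReal l < u x} ∩ {x | ENNReal.ofReal s < v x})
      ≤ min (mP {x | ENNReal.ofReal l < u x}) (mP {x | ENNReal.ofReal s < v x}) :=
        le_min (measure_mono inter_subset_left) (measure_mono inter_subset_right)
    _ ≤ min (mP {x | ENNReal.ofReal l < rearrP u x}) (mP {x | ENNReal.ofReal s < rearrP v x}) :=
        min_le_min (dist_rearr_ge u l) (dist_rearr_ge v s)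
    _ = mP ({x | ENNReal.ofReal l < rearrP u x} ∩ {x | ENNReal.ofReal s < rearrP v x}) := by
        rw [mP_apply, mP_apply, mP_apply]
        have key : ({x | ENNReal.ofReal l < rearrP u x} ∩ {x | ENNReal.ofReal s < rearrP v x})
            ∩ Ioi 0
            = ({x | ENNReal.ofReal l < rearrP u x} ∩ Ioi 0)
              ∩ ({x | ENNReal.ofReal s < rearrP v x} ∩ Ioi 0) := by
          ext x; simp only [mem_inter_iff, mem_setOf_eq, mem_Ioi]; tauto
        rw [key]
        refine (nested_min ?_ ?_ inter_subset_right inter_subset_right).symm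
        · rintro y ⟨hy1, hy2⟩ z hz1 hz2
          exact ⟨lt_of_lt_of_le hy1 (rearrP_anti u hz2), hz1⟩
        · rintro y ⟨hy1, hy2⟩ z hz1 hz2
          exact ⟨lt_of_lt_of_le hy1 (rearrP_anti v hz2), hz1⟩

open Classical in
/-- measurability of a family of rearrangement-type infima -/
lemma rearr_family_meas {α : Type*} [MeasurableSpace α] (D : α → ℝ≥0∞ → ℝ≥0∞)
    (hanti : ∀ a, Antitone (D a)) (hmeas : ∀ l, Measurable fun a => D a l) :
    Measurable fun p : α × ℝ => sInf {l | 0 < l ∧ D p.1 l ≤ ENNReal.ofReal p.2} := by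
  set e : Option ℚ → ℝ≥0∞ := fun o => o.elim ⊤ (fun q => ENNReal.ofReal q) with he
  have key : ∀ p : α × ℝ, sInf {l | 0 < l ∧ D p.1 l ≤ ENNReal.ofReal p.2}
      = ⨅ o : Option ℚ, (if 0 < e o ∧ D p.1 (e o) ≤ ENNReal.ofReal p.2 then e o else ⊤) := by
    intro p
    set S := {l | 0 < l ∧ D p.1 l ≤ ENNReal.ofReal p.2} with hS
    apply le_antisymm
    · apply le_iInf
      intro o
      by_cases h : 0 < e o ∧ D p.1 (e o) ≤ ENNReal.ofReal p.2
      · rw [if_pos h]; exact sInf_le h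
      · rw [if_neg h]; exact le_top
    · -- iInf ≤ sInf via density
      apply le_of_forall_gt_imp_ge_of_dense
      intro c hc
      obtain ⟨l, hl, hlc⟩ := exists_lt_of_csInf_lt (by
        rcases eq_or_ne (sInf S) ⊤ with h | h
        · exact absurd (h ▸ hc) (by simp)
        · by_contra hne
          rw [not_nonempty_iff_eq_empty] at hne
          rw [hne] at hc
          simp at hc) hc
      -- find o with l < e o ≤ c  (or e o < c), e o ∈ S
      have : ∃ o : Option ℚ, l < e o ∧ e o ≤ c := by
        rcases eq_or_ne c ⊤ with rfl | hctop
        · exact ⟨none, hlc, le_rfl⟩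
        · have hlfin : l ≠ ⊤ := ne_top_of_lt hlc
          obtain ⟨q, hq1, hq2⟩ := exists_rat_btwn
            ((ENNReal.toReal_lt_toReal hlfin hctop).2 hlc)
          refine ⟨some q, ?_, ?_⟩
          · have : l = ENNReal.ofReal l.toReal := (ENNReal.ofReal_toReal hlfin).symm
            rw [this]
            simp only [he, Option.elim]
            exact ENNReal.ofReal_lt_ofReal_iff_of_nonneg ENNReal.toReal_nonneg |>.2 hq1
          · have : c = ENNReal.ofReal c.toReal := (ENNReal.ofReal_toReal hctop).symm
            rw [this]
            simp only [he, Option.elim]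
            exact (ENNReal.ofReal_le_ofReal hq2.le)
      obtain ⟨o, ho1, ho2⟩ := this
      have hoS : 0 < e o ∧ D p.1 (e o) ≤ ENNReal.ofReal p.2 :=
        ⟨lt_of_le_of_lt zero_le ho1, le_trans (hanti p.1 ho1.le) hl.2⟩
      calc (⨅ o : Option ℚ, (if 0 < e o ∧ D p.1 (e o) ≤ ENNReal.ofReal p.2 then e o else ⊤))
          ≤ (if 0 < e o ∧ D p.1 (e o) ≤ ENNReal.ofReal p.2 then e o else ⊤) := iInf_le _ o
        _ = e o := if_pos hoS
        _ ≤ c := ho2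
  simp_rw [key]
  apply Measurable.iInf
  intro o
  by_cases h0 : 0 < e o
  · have : ∀ p : α × ℝ, (if 0 < e o ∧ D p.1 (e o) ≤ ENNReal.ofReal p.2 then e o else ⊤)
        = (if D p.1 (e o) ≤ ENNReal.ofReal p.2 then e o else ⊤) := by
      intro p; by_cases h : D p.1 (e o) ≤ ENNReal.ofReal p.2 <;> simp [h, h0]
    simp_rw [this]
    apply Measurable.ite _ measurable_const measurable_const
    exact measurableSet_le ((hmeas (e o)).comp measurable_fst)
      (ENNReal.measurable_ofReal.comp measurable_snd)
  · have : ∀ p : α × ℝ, (if 0 < e o ∧ D p.1 (e o) ≤ ENNReal.ofReal p.2 then e o else ⊤)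
        = ⊤ := by
      intro p; rw [if_neg]; tauto
    simp_rw [this]
    exact measurable_const

section Meas
variable {K : ℝ → ℝ → ℝ≥0∞} (hK : Measurable (uncurry K))

lemma dist_meas {W : ℝ → ℝ → ℝ≥0∞} (hW : Measurable (uncurry W)) (l : ℝ≥0∞) :
    Measurable fun x => mP {y | l < W x y} := by
  have h1 : ∀ x, mP {y | l < W x y}
      = ∫⁻ y, ({p : ℝ × ℝ | l < W p.1 p.2}.indicator 1 (x, y)) ∂mP := by
    intro x
    have : (fun y => ({p : ℝ × ℝ | l < W p.1 p.2}.indicator 1 (x, y) : ℝ≥0∞))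
        = {y | l < W x y}.indicator 1 := by
      ext y
      by_cases h : l < W x y <;> simp [h, indicator_apply, mem_setOf_eq]
    rw [this, lintegral_indicator_one]
    exact measurableSet_lt measurable_const (hW.comp (measurable_prodMk_left))
  simp_rw [h1]
  apply Measurable.lintegral_prod_right'
  exact measurable_one.indicator (measurableSet_lt measurable_const hW)

include hK in
lemma G_meas : Measurable fun p : ℝ × ℝ => rearrP (K p.1) p.2 := by
  unfold rearrP rearr
  exact rearr_family_meas (fun x l' => mP {y | l' < K x y})
    (fun a l₁ l₂ h => measure_mono fun y hy => lt_of_le_of_lt h hy)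
    (fun l => dist_meas hK l)

include hK in
lemma L_meas : Measurable fun p : ℝ × ℝ => iterRearr K p.1 p.2 := by
  have hG : Measurable (uncurry fun s x => rearrP (K x) s) :=
    Measurable.comp (g := fun p : ℝ × ℝ => rearrP (K p.1) p.2) (f := Prod.swap)
      (G_meas hK) measurable_swap
  have h1 : Measurable fun q : ℝ × ℝ => rearrP (fun x => rearrP (K x) q.1) q.2 := by
    show Measurable fun q : ℝ × ℝ => sInf {l | 0 < l ∧
      mP {x | l < rearrP (K x) q.1} ≤ ENNReal.ofReal q.2}
    exact rearr_family_meas (fun s l' => mP {x | l' < rearrP (K x) s})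
      (fun a l₁ l₂ h => measure_mono fun y hy => lt_of_le_of_lt h hy)
      (fun l => dist_meas hG l)
  exact Measurable.comp (g := fun q : ℝ × ℝ => rearrP (fun x => rearrP (K x) q.1) q.2)
    (f := Prod.swap) h1 measurable_swap

include hK in
lemma TK_meas {f : ℝ → ℝ≥0∞} (hf : Measurable f) : Measurable (TK K f) := by
  unfold TK
  exact Measurable.lintegral_prod_right' (f := fun p : ℝ × ℝ => K p.1 p.2 * f p.2)
    (hK.mul (hf.comp measurable_snd))

end Meas

lemma sInf_Ioi' (a : ℝ≥0∞) : sInf (Ioi a) = a := by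
  apply le_antisymm
  · exact le_of_forall_gt_imp_ge_of_dense fun c hc => sInf_le hc
  · exact le_sInf fun b hb => le_of_lt hb

lemma rearr_indicator_le {E : Set ℝ} {t τ : ℝ} (hE : mP E ≤ ENNReal.ofReal t) (hτ : 0 < τ) :
    rearrP (E.indicator 1) τ ≤ (Ioc (0:ℝ) t).indicator 1 τ := by
  have hind : ∀ x, E.indicator (1 : ℝ → ℝ≥0∞) x ≤ 1 := by
    intro x; by_cases h : x ∈ E <;> simp [h]
  by_cases h : τ ≤ t
  · rw [indicator_of_mem (mem_Ioc.2 ⟨hτ, h⟩)]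
    calc rearrP (E.indicator 1) τ
        ≤ sInf (Ioi (1:ℝ≥0∞)) := by
          apply sInf_le_sInf
          intro l hl
          refine ⟨lt_trans zero_lt_one hl, ?_⟩
          have : {x | l < E.indicator 1 x} = ∅ := by
            ext x
            simp only [mem_setOf_eq, mem_empty_iff_false, iff_false, not_lt]
            exact (hind x).trans hl.le
          rw [this, measure_empty]
          exact zero_le
      _ = 1 := sInf_Ioi' 1
  · rw [indicator_of_notMem (fun hmem => h (mem_Ioc.1 hmem).2)]
    have : rearrP (E.indicator 1) τ ≤ sInf (Ioi (0:ℝ≥0∞)) := by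
      apply sInf_le_sInf
      intro l hl
      refine ⟨hl, ?_⟩
      have hsub : {x | l < E.indicator 1 x} ⊆ E := by
        intro x hx
        by_contra hxE
        simp only [mem_setOf_eq, indicator_of_notMem hxE] at hx
        simp at hx
      calc mP {x | l < E.indicator 1 x} ≤ mP E := measure_mono hsub
        _ ≤ ENNReal.ofReal t := hE
        _ ≤ ENNReal.ofReal τ := ENNReal.ofReal_le_ofReal (le_of_not_ge h)
    rw [sInf_Ioi'] at this
    exact this

/-- cut a measurable set to exact measure -/
lemma exists_cut {M : Set ℝ} {c : ℝ} (hc : 0 < c)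
    (h : ENNReal.ofReal c < mP M) : ∃ X : ℝ, mP (M ∩ Ioc 0 X) = ENNReal.ofReal c := by
  set g : ℝ → ℝ≥0∞ := fun X => mP (M ∩ Ioc 0 X) with hg
  have glip : ∀ a b : ℝ, a ≤ b → g b ≤ g a + ENNReal.ofReal (b - a) := by
    intro a b hab
    have hsub : M ∩ Ioc 0 b ⊆ (M ∩ Ioc 0 a) ∪ Ioc a b := by
      rintro x ⟨hx1, hx2, hx3⟩
      by_cases hxa : x ≤ a
      · exact Or.inl ⟨hx1, hx2, hxa⟩
      · exact Or.inr ⟨lt_of_not_ge hxa, hx3⟩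
    calc g b ≤ mP ((M ∩ Ioc 0 a) ∪ Ioc a b) := measure_mono hsub
      _ ≤ g a + mP (Ioc a b) := measure_union_le _ _
      _ ≤ g a + ENNReal.ofReal (b - a) := by
          apply add_le_add_right
          rw [mP_apply]
          calc volume (Ioc a b ∩ Ioi 0) ≤ volume (Ioc a b) := measure_mono inter_subset_left
            _ = ENNReal.ofReal (b - a) := Real.volume_Ioc
  have hsup : ∃ n : ℕ, ENNReal.ofReal c ≤ g n := by
    have hM : mP M = ⨆ n : ℕ, g n := by
      have hmono : Monotone fun n : ℕ => M ∩ Ioc 0 (n : ℝ) := fun n m hnm =>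
        inter_subset_inter_right _ (Ioc_subset_Ioc_right (Nat.cast_le.2 hnm))
      have hU : M ∩ Ioi 0 = ⋃ n : ℕ, M ∩ Ioc 0 (n : ℝ) := by
        ext x
        simp only [mem_inter_iff, mem_Ioi, mem_iUnion, mem_Ioc]
        constructor
        · rintro ⟨hx1, hx2⟩
          obtain ⟨n, hn⟩ := exists_nat_ge x
          exact ⟨n, hx1, hx2, hn⟩
        · rintro ⟨n, hn1, hn2, hn3⟩
          exact ⟨hn1, hn2⟩
      have e1 : ∀ n : ℕ, volume (M ∩ Ioc 0 (n:ℝ)) = g n := by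
        intro n
        show volume (M ∩ Ioc 0 (n:ℝ)) = mP (M ∩ Ioc 0 (n:ℝ))
        rw [mP_apply]
        congr 1
        exact (inter_eq_left.2 (fun x hx => hx.2.1)).symm
      rw [mP_apply]
      calc volume (M ∩ Ioi 0) = volume (⋃ n : ℕ, M ∩ Ioc 0 (n : ℝ)) := by rw [hU]
        _ = ⨆ n : ℕ, volume (M ∩ Ioc 0 (n:ℝ)) := Directed.measure_iUnion hmono.directed_le
        _ = ⨆ n : ℕ, g n := by simp_rw [e1]
    rw [hM] at h
    obtain ⟨n, hn⟩ := lt_iSup_iff.1 h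
    exact ⟨n, hn.le⟩
  set W := {X : ℝ | 0 ≤ X ∧ ENNReal.ofReal c ≤ g X} with hW
  obtain ⟨n, hn⟩ := hsup
  have Wne : W.Nonempty := ⟨n, n.cast_nonneg, hn⟩
  have Wbdd : BddBelow W := ⟨0, fun X hX => hX.1⟩
  set X₀ := sInf W with hX₀
  have claim1 : ENNReal.ofReal c ≤ g X₀ := by
    apply ENNReal.le_of_forall_pos_le_add
    intro ε hε _
    obtain ⟨X, hXW, hXlt⟩ := exists_lt_of_csInf_lt Wne
      (lt_add_of_pos_right X₀ (by exact_mod_cast hε : (0:ℝ) < ε))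
    have hXX₀ : X₀ ≤ X := csInf_le Wbdd hXW
    calc ENNReal.ofReal c ≤ g X := hXW.2
      _ ≤ g X₀ + ENNReal.ofReal (X - X₀) := glip _ _ hXX₀
      _ ≤ g X₀ + ε := by
          apply add_le_add_right
          calc ENNReal.ofReal (X - X₀) ≤ ENNReal.ofReal (ε:ℝ) :=
                ENNReal.ofReal_le_ofReal (by linarith)
            _ = (ε : ℝ≥0∞) := ENNReal.ofReal_coe_nnreal
  have hX₀pos : 0 < X₀ := by
    by_contra h0
    push_neg at h0
    have hempty : g X₀ = 0 := by
      rw [hg]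
      have : Ioc (0:ℝ) X₀ = ∅ := Ioc_eq_empty (by exact fun hlt => absurd h0 (not_le.2 hlt))
      simp [this]
    rw [hempty] at claim1
    exact absurd claim1 (by simpa using (ENNReal.ofReal_pos.2 hc).ne')
  have claim2 : g X₀ ≤ ENNReal.ofReal c := by
    apply ENNReal.le_of_forall_pos_le_add
    intro ε hε _
    have hεR : (0:ℝ) < ε := by exact_mod_cast hε
    set δ := min (X₀ / 2) (ε : ℝ) with hδ
    have hδpos : 0 < δ := lt_min (by linarith) hεR
    have hδX₀ : X₀ - δ < X₀ := by linarith
    have hnotW : X₀ - δ ∉ W := fun hmem => absurd (csInf_le Wbdd hmem) (not_le.2 hδX₀)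
    have hlt2 : g (X₀ - δ) < ENNReal.ofReal c := by
      by_contra hcc
      push_neg at hcc
      exact hnotW ⟨by
        have : δ ≤ X₀ / 2 := min_le_left _ _
        linarith, hcc⟩
    calc g X₀ ≤ g (X₀ - δ) + ENNReal.ofReal (X₀ - (X₀ - δ)) := glip _ _ (by linarith)
      _ ≤ ENNReal.ofReal c + ε := by
          apply add_le_add hlt2.le
          calc ENNReal.ofReal (X₀ - (X₀ - δ)) = ENNReal.ofReal δ := by ring_nf
            _ ≤ ENNReal.ofReal (ε:ℝ) := ENNReal.ofReal_le_ofReal (min_le_right _ _)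
            _ = (ε : ℝ≥0∞) := ENNReal.ofReal_coe_nnreal
  exact ⟨X₀, le_antisymm claim2 claim1⟩

lemma core_est {K : ℝ → ℝ → ℝ≥0∞} {f : ℝ → ℝ≥0∞} (hK : Measurable (uncurry K))
    (hf : Measurable f) {t : ℝ} (ht : 0 < t) {l : ℝ≥0∞}
    (hlt : ENNReal.ofReal t < mP {x | l < TK K f x}) {t' : ℝ} (ht' : 0 < t') (ht't : t' < t) :
    ENNReal.ofReal t' * l
      ≤ ∫⁻ τ in Ioc (0:ℝ) t, ∫⁻ s, iterRearr K τ s * rearrP f s ∂mP := by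
  have hFmeas : Measurable (TK K f) := TK_meas hK hf
  set M := {x | l < TK K f x} with hMdef
  have hM : MeasurableSet M := measurableSet_lt measurable_const hFmeas
  have h1 : ENNReal.ofReal t' < mP M :=
    lt_of_lt_of_le ((ENNReal.ofReal_lt_ofReal_iff ht).2 ht't) hlt.le
  obtain ⟨X, hX⟩ := exists_cut ht' h1
  set E := M ∩ Ioc 0 X with hEdef
  have hEmeas : MeasurableSet E := hM.inter measurableSet_Ioc
  have hEle : mP E ≤ ENNReal.ofReal t := by
    rw [hX]; exact ENNReal.ofReal_le_ofReal ht't.le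
  have hindmeas : Measurable (E.indicator (1 : ℝ → ℝ≥0∞)) :=
    measurable_one.indicator hEmeas
  have hindle : ∀ x, E.indicator (1 : ℝ → ℝ≥0∞) x ≤ 1 := by
    intro x; by_cases h : x ∈ E <;> simp [h]
  -- lower bound
  have lower : ENNReal.ofReal t' * l ≤ ∫⁻ x, E.indicator 1 x * TK K f x ∂mP := by
    have hpt : ∀ x, E.indicator (fun _ => l) x ≤ E.indicator 1 x * TK K f x := by
      intro x
      by_cases hx : x ∈ E
      · simp only [indicator_of_mem hx, Pi.one_apply, one_mul]
        exact (le_of_lt hx.1)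
      · rw [indicator_of_notMem hx, indicator_of_notMem hx, zero_mul]
    calc ENNReal.ofReal t' * l = l * mP E := by rw [hX, mul_comm]
      _ = ∫⁻ x, E.indicator (fun _ => l) x ∂mP := (lintegral_indicator_const hEmeas l).symm
      _ ≤ _ := lintegral_mono hpt
  -- pointwise Hardy–Littlewood in the second variable
  have hFh : ∀ x, TK K f x ≤ ∫⁻ s, rearrP (K x) s * rearrP f s ∂mP := by
    intro x
    have hKx : Measurable (K x) := hK.comp measurable_prodMk_left
    exact HL hKx hf
  -- joint measurability
  have hGmeas := G_meas hK
  have hGs : ∀ s : ℝ, Measurable fun x => rearrP (K x) s := by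
    intro s
    exact Measurable.comp (g := fun p : ℝ × ℝ => rearrP (K p.1) p.2)
      (f := fun x => (x, s)) hGmeas (measurable_id.prodMk measurable_const)
  have hLτ : ∀ s : ℝ, Measurable fun τ => iterRearr K τ s := by
    intro s
    exact Measurable.comp (g := fun p : ℝ × ℝ => iterRearr K p.1 p.2)
      (f := fun τ => (τ, s)) (L_meas hK) (measurable_id.prodMk measurable_const)
  -- upper bound chain
  have step1 : ∫⁻ x, E.indicator 1 x * TK K f x ∂mP
      ≤ ∫⁻ x, ∫⁻ s, E.indicator 1 x * (rearrP (K x) s * rearrP f s) ∂mP ∂mP := by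
    apply lintegral_mono
    intro x
    show E.indicator 1 x * TK K f x ≤ ∫⁻ s, E.indicator 1 x * (rearrP (K x) s * rearrP f s) ∂mP
    rw [lintegral_const_mul' _ _ (lt_of_le_of_lt (hindle x) ENNReal.one_lt_top).ne]
    exact mul_le_mul_right (hFh x) _
  have step2 : ∫⁻ x, ∫⁻ s, E.indicator 1 x * (rearrP (K x) s * rearrP f s) ∂mP ∂mP
      = ∫⁻ s, (∫⁻ x, E.indicator 1 x * rearrP (K x) s ∂mP) * rearrP f s ∂mP := by
    rw [lintegral_lintegral_swap]
    · apply lintegral_congr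
      intro s
      rw [← lintegral_mul_const (f := fun x => E.indicator 1 x * rearrP (K x) s) _ (hindmeas.mul (hGs s))]
      apply lintegral_congr
      intro x
      ring
    · apply Measurable.aemeasurable
      show Measurable fun p : ℝ × ℝ =>
        E.indicator 1 p.1 * (rearrP (K p.1) p.2 * rearrP f p.2)
      apply Measurable.mul
      · exact hindmeas.comp measurable_fst
      · apply Measurable.mul hGmeas
        exact Measurable.comp (g := rearrP f) (f := Prod.snd) (rearrP_meas f) measurable_snd
  have step5 : ∀ s : ℝ, ∫⁻ x, E.indicator 1 x * rearrP (K x) s ∂mP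
      ≤ ∫⁻ τ in Ioc (0:ℝ) t, iterRearr K τ s ∂volume := by
    intro s
    have e0 : ∫⁻ x, E.indicator 1 x * rearrP (K x) s ∂mP
        = ∫⁻ x, (fun x => rearrP (K x) s) x * E.indicator 1 x ∂mP :=
      lintegral_congr fun x => mul_comm _ _
    rw [e0]
    calc ∫⁻ x, (fun x => rearrP (K x) s) x * E.indicator 1 x ∂mP
        ≤ ∫⁻ τ, rearrP (fun x => rearrP (K x) s) τ * rearrP (E.indicator 1) τ ∂mP :=
          HL (hGs s) hindmeas
      _ ≤ ∫⁻ τ, (Ioc (0:ℝ) t).indicator (fun τ => iterRearr K τ s) τ ∂mP := by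
          apply lintegral_mono_ae
          filter_upwards [ae_restrict_mem measurableSet_Ioi] with τ hτ
          have h2 : rearrP (fun x => rearrP (K x) s) τ * rearrP (E.indicator 1) τ
              ≤ iterRearr K τ s * (Ioc (0:ℝ) t).indicator 1 τ :=
            mul_le_mul_right (rearr_indicator_le hEle hτ) _
          refine h2.trans (le_of_eq ?_)
          by_cases hmem : τ ∈ Ioc (0:ℝ) t
          · simp only [indicator_of_mem hmem, Pi.one_apply, mul_one]
          · simp only [indicator_of_notMem hmem, mul_zero]
      _ = ∫⁻ τ in Ioc (0:ℝ) t, iterRearr K τ s ∂mP := lintegral_indicator measurableSet_Ioc _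
      _ = ∫⁻ τ in Ioc (0:ℝ) t, iterRearr K τ s ∂volume := by
          show ∫⁻ τ, iterRearr K τ s ∂((volume.restrict (Ioi 0)).restrict (Ioc 0 t)) = _
          have hsub2 : Ioc (0:ℝ) t ∩ Ioi 0 = Ioc (0:ℝ) t :=
            inter_eq_left.2 fun x hx => hx.1
          rw [Measure.restrict_restrict measurableSet_Ioc, hsub2]
  have step6 : ∫⁻ s, (∫⁻ x, E.indicator 1 x * rearrP (K x) s ∂mP) * rearrP f s ∂mP
      ≤ ∫⁻ s, ∫⁻ τ in Ioc (0:ℝ) t, iterRearr K τ s * rearrP f s ∂volume ∂mP := by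
    apply lintegral_mono
    intro s
    calc (∫⁻ x, E.indicator 1 x * rearrP (K x) s ∂mP) * rearrP f s
        ≤ (∫⁻ τ in Ioc (0:ℝ) t, iterRearr K τ s ∂volume) * rearrP f s :=
          mul_le_mul_left (step5 s) _
      _ = ∫⁻ τ in Ioc (0:ℝ) t, iterRearr K τ s * rearrP f s ∂volume :=
          (lintegral_mul_const _ (hLτ s)).symm
  have step7 : ∫⁻ s, ∫⁻ τ in Ioc (0:ℝ) t, iterRearr K τ s * rearrP f s ∂volume ∂mP
      = ∫⁻ τ in Ioc (0:ℝ) t, ∫⁻ s, iterRearr K τ s * rearrP f s ∂mP := by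
    apply lintegral_lintegral_swap
    apply Measurable.aemeasurable
    show Measurable fun p : ℝ × ℝ => iterRearr K p.2 p.1 * rearrP f p.1
    apply Measurable.mul
    · exact Measurable.comp (g := fun q : ℝ × ℝ => iterRearr K q.1 q.2)
        (f := Prod.swap) (L_meas hK) measurable_swap
    · exact Measurable.comp (g := rearrP f) (f := Prod.fst) (rearrP_meas f) measurable_fst
  calc ENNReal.ofReal t' * l ≤ ∫⁻ x, E.indicator 1 x * TK K f x ∂mP := lower
    _ ≤ _ := step1
    _ = _ := step2
    _ ≤ _ := step6
    _ = _ := step7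

lemma main_est {K : ℝ → ℝ → ℝ≥0∞} {f : ℝ → ℝ≥0∞} (hK : Measurable (uncurry K))
    (hf : Measurable f) {t : ℝ} (ht : 0 < t) :
    rearrP (TK K f) t ≤ (ENNReal.ofReal t)⁻¹
      * ∫⁻ τ in Ioc (0:ℝ) t, ∫⁻ s, iterRearr K τ s * rearrP f s ∂mP := by
  set B := ∫⁻ τ in Ioc (0:ℝ) t, ∫⁻ s, iterRearr K τ s * rearrP f s ∂mP with hB
  by_contra hcon
  push_neg at hcon
  obtain ⟨l, hl1, hl2⟩ := exists_between hcon
  have hl0 : 0 < l := lt_of_le_of_lt zero_le hl1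
  have hltop : l ≠ ⊤ := ne_top_of_lt hl2
  have hnot : ENNReal.ofReal t < mP {x | l < TK K f x} := by
    by_contra hmem
    push_neg at hmem
    exact absurd (sInf_le ⟨hl0, hmem⟩ : rearrP (TK K f) t ≤ l) (not_le.2 hl2)
  have key : ∀ ε : ℝ, 0 < ε → ε < t →
      ENNReal.ofReal t * l ≤ B + ENNReal.ofReal ε * l := by
    intro ε hε hεt
    have h2 := core_est hK hf ht hnot (by linarith : (0:ℝ) < t - ε) (by linarith)
    calc ENNReal.ofReal t * l
        = (ENNReal.ofReal (t - ε) + ENNReal.ofReal ε) * l := by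
          rw [← ENNReal.ofReal_add (by linarith) hε.le]
          norm_num
      _ = ENNReal.ofReal (t - ε) * l + ENNReal.ofReal ε * l := add_mul _ _ _
      _ ≤ B + ENNReal.ofReal ε * l := add_le_add_left h2 _
  have final : ENNReal.ofReal t * l ≤ B := by
    apply ENNReal.le_of_forall_pos_le_add
    intro δ hδ _
    have hδR : (0:ℝ) < δ := hδ
    set ε := min (t / 2) ((δ:ℝ) / (l.toReal + 1)) with hε
    have hlt0 : (0:ℝ) ≤ l.toReal := ENNReal.toReal_nonneg
    have hεpos : 0 < ε := lt_min (by linarith) (by positivity)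
    have hεt : ε < t := lt_of_le_of_lt (min_le_left _ _) (by linarith)
    have hbound : ENNReal.ofReal ε * l ≤ (δ : ℝ≥0∞) := by
      calc ENNReal.ofReal ε * l = ENNReal.ofReal ε * ENNReal.ofReal l.toReal := by
            rw [ENNReal.ofReal_toReal hltop]
        _ = ENNReal.ofReal (ε * l.toReal) := (ENNReal.ofReal_mul hεpos.le).symm
        _ ≤ ENNReal.ofReal (δ:ℝ) := by
            apply ENNReal.ofReal_le_ofReal
            have h3 : ε ≤ (δ:ℝ) / (l.toReal + 1) := min_le_right _ _
            have h4 : ε * l.toReal ≤ (δ:ℝ) / (l.toReal + 1) * l.toReal :=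
              mul_le_mul_of_nonneg_right h3 hlt0
            have h5 : (δ:ℝ) / (l.toReal + 1) * l.toReal ≤ (δ:ℝ) := by
              rw [div_mul_eq_mul_div, div_le_iff₀ (by linarith)]
              nlinarith
            linarith
        _ = (δ : ℝ≥0∞) := ENNReal.ofReal_coe_nnreal
    calc ENNReal.ofReal t * l ≤ B + ENNReal.ofReal ε * l := key ε hεpos hεt
      _ ≤ B + δ := add_le_add_right hbound _
  have hcontr : l ≤ (ENNReal.ofReal t)⁻¹ * B := by
    have h6 := mul_le_mul_right final (ENNReal.ofReal t)⁻¹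
    rwa [← mul_assoc, ENNReal.inv_mul_cancel (ENNReal.ofReal_pos.2 ht).ne'
      ENNReal.ofReal_ne_top, one_mul] at h6
  exact absurd hcontr (not_le.2 hl1)

lemma nfun_mono {Φ : ℝ → ℝ} (h : IsNFunction Φ) {a b : ℝ} (ha : 0 ≤ a) (hab : a ≤ b) :
    Φ a ≤ Φ b := by
  obtain ⟨φ, hmono, hpos, hsurj, hint⟩ := h
  rcases le_or_gt b 0 with hb | hb
  · have ha0 : a = 0 := le_antisymm (hab.trans hb) ha
    have hb0 : b = 0 := le_antisymm hb (ha0 ▸ hab)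
    rw [ha0, hb0]
  · set ψ : ℝ → ℝ := fun y => if 0 < y then φ y else 0 with hψ
    have hψmeas : Measurable ψ := by
      apply measurable_of_Iio
      intro c
      rcases le_or_gt c 0 with hc | hc
      · have : ψ ⁻¹' Iio c = ∅ := by
          apply eq_empty_of_forall_notMem
          intro y hy
          simp only [mem_preimage, mem_Iio, hψ] at hy
          by_cases hy0 : 0 < y
          · rw [if_pos hy0] at hy
            have := hpos y hy0
            linarith
          · rw [if_neg hy0] at hy
            linarith
        rw [this]; exact MeasurableSet.empty
      · apply lowerSet_measurable
        intro y hy z hz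
        simp only [mem_preimage, mem_Iio, hψ] at hy ⊢
        by_cases hz0 : 0 < z
        · rw [if_pos hz0]
          have hy0 : 0 < y := lt_of_lt_of_le hz0 hz
          rw [if_pos hy0] at hy
          exact lt_of_le_of_lt (hmono hz0 hy0 hz) hy
        · rw [if_neg hz0]; exact hc
    have hψnn : ∀ y, 0 ≤ ψ y := by
      intro y
      by_cases h : 0 < y
      · simp only [hψ, if_pos h]; exact (hpos y h).le
      · simp only [hψ, if_neg h]; exact le_rfl
    have hφψ : ∀ x : ℝ, (∫ y in Ioc 0 x, φ y) = ∫ y in Ioc 0 x, ψ y := by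
      intro x
      apply setIntegral_congr_fun measurableSet_Ioc
      intro y hy
      simp only [hψ, if_pos hy.1]
    have hint2 : IntegrableOn ψ (Ioc 0 b) volume := by
      refine ⟨hψmeas.aestronglyMeasurable, ?_⟩
      apply HasFiniteIntegral.of_bounded (C := φ b)
      filter_upwards [ae_restrict_mem measurableSet_Ioc] with y hy
      rw [Real.norm_eq_abs, abs_of_nonneg (hψnn y)]
      simp only [hψ, if_pos hy.1]
      exact hmono hy.1 hb hy.2
    rw [hint a, hint b, hφψ a, hφψ b]
    apply setIntegral_mono_set hint2
    · filter_upwards with y using hψnn y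
    · exact HasSubset.Subset.eventuallyLE (Ioc_subset_Ioc_right hab)

lemma appE_mono {Φ : ℝ → ℝ} (h : IsNFunction Φ) : Monotone (appE Φ) := by
  intro x y hxy
  unfold appE
  rcases eq_or_ne y ⊤ with rfl | hy
  · rw [if_pos rfl]; exact le_top
  · have hx : x ≠ ⊤ := fun hx => hy (top_le_iff.1 (hx ▸ hxy))
    rw [if_neg hx, if_neg hy]
    exact ENNReal.ofReal_le_ofReal
      (nfun_mono h ENNReal.toReal_nonneg (ENNReal.toReal_mono hy hxy))

lemma gaugeW_mono {Φ : ℝ → ℝ} (hΦ : IsNFunction Φ) (u : ℝ → ℝ) {f g : ℝ → ℝ≥0∞}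
    (h : ∀ x ∈ Ioi (0:ℝ), f x ≤ g x) : gaugeW Φ u f ≤ gaugeW Φ u g := by
  apply sInf_le_sInf
  rintro l ⟨hl1, hl2⟩
  refine ⟨hl1, le_trans ?_ hl2⟩
  apply lintegral_mono_ae
  filter_upwards [ae_restrict_mem measurableSet_Ioi] with x hx
  exact mul_le_mul_left
    (appE_mono hΦ (ENNReal.div_le_div_right (h x hx) l)) _


/-- Theorem 8: if the Hardy averaging operator is bounded on
nonincreasing functions in `ρ_{Φ₁,u₁}` and `ρ_{Φ₁,u₁}(T_L f*) ≤ C ρ_{Φ₂,u₂}(f*)`,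
where `L` is the iterated rearrangement of `K`, then
`ρ_{Φ₁,u₁}((T_K f)*) ≤ C′ ρ_{Φ₂,u₂}(f*)`. -/
theorem statement_11 (K : ℝ → ℝ → ℝ≥0∞) (hK : Measurable (uncurry K))
    (Φ₁ Φ₂ : ℝ → ℝ) (h1 : IsNFunction Φ₁) (h2 : IsNFunction Φ₂)
    (hΔ1 : Delta2AtInfty Φ₁)
    (u₁ u₂ : ℝ → ℝ) (hu₁ : IsWeight u₁) (hu₂ : IsWeight u₂)
    (hu₁inf : ∫⁻ x in Ioi (0:ℝ), ENNReal.ofReal (u₁ x) = ∞)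
    (hHardy : ∃ C₀ > (0:ℝ), ∀ g : ℝ → ℝ≥0∞, Measurable g → AntitoneOn g (Ioi 0) →
      gaugeW Φ₁ u₁ (fun t => (ENNReal.ofReal t)⁻¹ * ∫⁻ s in Ioc (0:ℝ) t, g s) ≤
        ENNReal.ofReal C₀ * gaugeW Φ₁ u₁ g)
    (hyp : ∃ C > (0:ℝ), ∀ f : ℝ → ℝ≥0∞, Measurable f →
      gaugeW Φ₁ u₁ (fun x => ∫⁻ s in Ioi (0:ℝ), iterRearr K x s * rearrP f s) ≤
        ENNReal.ofReal C * gaugeW Φ₂ u₂ (rearrP f)) :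
    ∃ C' > (0:ℝ), ∀ f : ℝ → ℝ≥0∞, Measurable f →
      gaugeW Φ₁ u₁ (rearrP (TK K f)) ≤ ENNReal.ofReal C' * gaugeW Φ₂ u₂ (rearrP f) := by
  obtain ⟨C₀, hC₀, hH⟩ := hHardy
  obtain ⟨C, hC, hhyp⟩ := hyp
  refine ⟨C₀ * C, mul_pos hC₀ hC, ?_⟩
  intro f hf
  have hTLanti : Antitone (fun τ => ∫⁻ s in Ioi (0:ℝ), iterRearr K τ s * rearrP f s) := by
    intro τ₁ τ₂ h12
    apply lintegral_mono
    intro s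
    exact mul_le_mul_left (rearr_anti mP (fun x => rearrP (K x) s) h12) _
  have hTLmeas : Measurable (fun τ => ∫⁻ s in Ioi (0:ℝ), iterRearr K τ s * rearrP f s) :=
    hTLanti.measurable
  have step_main : ∀ x ∈ Ioi (0:ℝ), rearrP (TK K f) x
      ≤ (ENNReal.ofReal x)⁻¹ * ∫⁻ τ in Ioc (0:ℝ) x,
          (fun τ => ∫⁻ s in Ioi (0:ℝ), iterRearr K τ s * rearrP f s) τ := by
    intro x hx
    exact main_est hK hf hx
  calc gaugeW Φ₁ u₁ (rearrP (TK K f))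
      ≤ gaugeW Φ₁ u₁ (fun x => (ENNReal.ofReal x)⁻¹ * ∫⁻ τ in Ioc (0:ℝ) x,
          (fun τ => ∫⁻ s in Ioi (0:ℝ), iterRearr K τ s * rearrP f s) τ) :=
        gaugeW_mono h1 u₁ step_main
    _ ≤ ENNReal.ofReal C₀ * gaugeW Φ₁ u₁
          (fun τ => ∫⁻ s in Ioi (0:ℝ), iterRearr K τ s * rearrP f s) :=
        hH _ hTLmeas (hTLanti.antitoneOn _)
    _ ≤ ENNReal.ofReal C₀ * (ENNReal.ofReal C * gaugeW Φ₂ u₂ (rearrP f)) :=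
        mul_le_mul_right (hhyp f hf) _
    _ = ENNReal.ofReal (C₀ * C) * gaugeW Φ₂ u₂ (rearrP f) := by
        rw [ENNReal.ofReal_mul hC₀.le, mul_assoc]


end
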